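/- For every real x, 2 ∫₀^∞ sin²(x t/(2π)) / (t · sinh t) dt = log(cosh(x/2)), where the integral is an absolutely convergent Lebesgue integral over (0,∞). -/

import Mathlib

open MeasureTheory

section g0_aux
open Real Filter Set Topology

lemma integrable_sin_exp (b : ℝ) {c : ℝ} (hc : 0 < c) :
    IntegrableOn (fun t : ℝ => Real.sin (b*t) * Real.exp (-(c*t))) (Set.Ioi 0) := by
  refine Integrable.mono (exp_neg_integrableOn_Ioi 0 hc)
    ((by fun_prop : Continuous fun t : ℝ => Real.sin (b*t) * Real.exp (-(c*t))).aestronglyMeasurable) ?_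
  refine Filter.Eventually.of_forall (fun t => ?_)
  rw [Real.norm_eq_abs, abs_mul, abs_exp, neg_mul]
  calc |Real.sin (b*t)| * Real.exp (-(c*t)) ≤ 1 * Real.exp (-(c*t)) := by
        gcongr; exact Real.abs_sin_le_one _
    _ = ‖Real.exp (-(c*t))‖ := by rw [one_mul, Real.norm_eq_abs, abs_exp]

lemma integral_sin_exp (b : ℝ) {c : ℝ} (hc : 0 < c) :
    ∫ t in Set.Ioi (0:ℝ), Real.sin (b*t) * Real.exp (-(c*t)) = b / (c^2 + b^2) := by
  have hcb : (0:ℝ) < c^2 + b^2 := by positivity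
  set F : ℝ → ℝ := fun t => -(Real.exp (-(c*t)) * (c * Real.sin (b*t) + b * Real.cos (b*t))) / (c^2+b^2) with hF
  have hderiv : ∀ t : ℝ, HasDerivAt F (Real.sin (b*t) * Real.exp (-(c*t))) t := by
    intro t
    have h1 : HasDerivAt (fun t : ℝ => Real.exp (-(c*t))) (-c * Real.exp (-(c*t))) t := by
      have := (Real.hasDerivAt_exp (-(c*t))).comp t (((hasDerivAt_id t).const_mul c).neg)
      simpa [mul_comm, Function.comp_def] using this
    have h2 : HasDerivAt (fun t : ℝ => Real.sin (b*t)) (b * Real.cos (b*t)) t := by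
      have := (Real.hasDerivAt_sin (b*t)).comp t ((hasDerivAt_id t).const_mul b)
      simpa [mul_comm, Function.comp_def] using this
    have h3 : HasDerivAt (fun t : ℝ => Real.cos (b*t)) (-(b * Real.sin (b*t))) t := by
      have := (Real.hasDerivAt_cos (b*t)).comp t ((hasDerivAt_id t).const_mul b)
      simpa [mul_comm, Function.comp_def] using this
    have h4 := (h1.mul ((h2.const_mul c).add (h3.const_mul b))).neg.div_const (c^2+b^2)
    refine h4.congr_deriv ?_
    rw [div_eq_iff hcb.ne']
    simp only [Pi.add_apply]
    ring
  have hlim : Tendsto F atTop (𝓝 0) := by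
    have h0 : Tendsto (fun t : ℝ => Real.exp (-(c*t))) atTop (𝓝 0) := by
      have hct : Tendsto (fun t : ℝ => c * t) atTop atTop := tendsto_id.const_mul_atTop hc
      simpa using hct
    have hbd : ∀ t : ℝ, |F t| ≤ (c + |b|) / (c^2+b^2) * Real.exp (-(c*t)) := by
      intro t
      rw [hF]
      simp only [abs_div, abs_neg, abs_mul, abs_exp]
      rw [abs_of_pos hcb, div_mul_eq_mul_div, mul_comm (c + |b|)]
      gcongr
      calc |c * Real.sin (b*t) + b * Real.cos (b*t)| ≤ |c * Real.sin (b*t)| + |b * Real.cos (b*t)| := abs_add_le _ _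
        _ ≤ c * 1 + |b| * 1 := by
            rw [abs_mul, abs_mul, abs_of_pos hc]
            gcongr <;> first | exact Real.abs_sin_le_one _ | exact abs_cos_le_one _
        _ = c + |b| := by ring
    have := h0.const_mul ((c + |b|) / (c^2+b^2))
    rw [mul_zero] at this
    refine squeeze_zero_norm (fun t => ?_) this
    simpa [Real.norm_eq_abs] using hbd t
  have := integral_Ioi_of_hasDerivAt_of_tendsto (a := 0)
    (hderiv 0).continuousAt.continuousWithinAt (fun t _ => hderiv t)
    (integrable_sin_exp b hc) hlim
  rw [this, hF]
  simp
  field_simp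

lemma t_mul_exp_le {c t : ℝ} (hc : 0 < c) (ht : 0 ≤ t) : t * Real.exp (-(c*t)) ≤ (2/c) * Real.exp (-(c/2)*t) := by
  have h1 : (c/2)*t ≤ Real.exp ((c/2)*t) := by
    have := Real.add_one_le_exp ((c/2)*t); linarith
  have h2 : t ≤ (2/c) * Real.exp ((c/2)*t) := by
    have h3 : c * t ≤ 2 * Real.exp ((c/2)*t) := by nlinarith
    calc t = (c*t)/c := by field_simp
      _ ≤ (2 * Real.exp ((c/2)*t))/c := by gcongr
      _ = (2/c)*Real.exp ((c/2)*t) := by ring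
  calc t * Real.exp (-(c*t)) ≤ ((2/c) * Real.exp ((c/2)*t)) * Real.exp (-(c*t)) := by
        gcongr
    _ = (2/c) * Real.exp (-(c/2)*t) := by
        rw [mul_assoc, ← Real.exp_add]; ring_nf

lemma integrable_phi (a : ℝ) {c : ℝ} (hc : 0 < c) :
    IntegrableOn (fun t : ℝ => 2 * Real.sin (a*t)^2 * Real.exp (-(c*t)) / t) (Set.Ioi 0) := by
  have hi : IntegrableOn (fun t : ℝ => (2*a^2) * ((2/c) * Real.exp (-(c/2)*t))) (Set.Ioi 0) :=
    ((exp_neg_integrableOn_Ioi 0 (by positivity : (0:ℝ) < c/2)).const_mul _).const_mul _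
  refine Integrable.mono' hi ?_ ?_
  · refine ContinuousOn.aestronglyMeasurable ?_ measurableSet_Ioi
    refine ContinuousOn.div (by fun_prop) continuousOn_id (fun t ht => ne_of_gt ht)
  · filter_upwards [ae_restrict_mem measurableSet_Ioi] with t ht
    have ht0 : (0:ℝ) < t := ht
    have hsin : Real.sin (a*t)^2 ≤ (a*t)^2 := Real.sin_sq_le_sq
    have h1 : 2 * Real.sin (a*t)^2 * Real.exp (-(c*t)) / t ≤ 2*a^2 * (t * Real.exp (-(c*t))) := by
      rw [div_le_iff₀ ht0]
      calc 2 * Real.sin (a*t)^2 * Real.exp (-(c*t)) ≤ 2 * (a*t)^2 * Real.exp (-(c*t)) := by gcongr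
        _ = 2*a^2 * (t * Real.exp (-(c*t))) * t := by ring
    have h2 : (0:ℝ) ≤ 2 * Real.sin (a*t)^2 * Real.exp (-(c*t)) / t := by positivity
    rw [Real.norm_eq_abs, abs_of_nonneg h2]
    calc 2 * Real.sin (a*t)^2 * Real.exp (-(c*t)) / t ≤ 2*a^2 * (t * Real.exp (-(c*t))) := h1
      _ ≤ 2*a^2 * ((2/c) * Real.exp (-(c/2)*t)) :=
          mul_le_mul_of_nonneg_left (t_mul_exp_le hc ht0.le) (by positivity)

lemma phi_hasDeriv {c : ℝ} (hc : 0 < c) (a : ℝ) :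
    HasDerivAt (fun a : ℝ => ∫ t in Set.Ioi (0:ℝ), 2 * Real.sin (a*t)^2 * Real.exp (-(c*t)) / t)
      (4*a/(c^2+4*a^2)) a := by
  have key := hasDerivAt_integral_of_dominated_loc_of_deriv_le (μ := volume.restrict (Set.Ioi 0))
    (F := fun (x : ℝ) (t : ℝ) => 2 * Real.sin (x*t)^2 * Real.exp (-(c*t)) / t)
    (F' := fun (x : ℝ) (t : ℝ) => 2 * Real.sin (2*x*t) * Real.exp (-(c*t)))
    (x₀ := a) (bound := fun t => 2 * Real.exp (-(c*t))) (s := Metric.ball a 1) (Metric.ball_mem_nhds a one_pos)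
    ?_ ?_ ?_ ?_ ?_ ?_
  · have hval : ∫ t in Set.Ioi (0:ℝ), 2 * Real.sin (2*a*t) * Real.exp (-(c*t)) = 4*a/(c^2+4*a^2) := by
      rw [show (fun t : ℝ => 2 * Real.sin (2*a*t) * Real.exp (-(c*t)))
            = (fun t : ℝ => (2:ℝ) * (Real.sin (2*a*t) * Real.exp (-(c*t))))
          from funext fun t => by ring]
      rw [MeasureTheory.integral_const_mul, integral_sin_exp (2*a) hc,
        show ((2*a):ℝ)^2 = 4*a^2 by ring]
      ring
    rw [hval] at key
    exact key.2
  · exact Filter.Eventually.of_forall fun x =>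
      (ContinuousOn.div (by fun_prop) continuousOn_id fun t ht => ne_of_gt ht).aestronglyMeasurable
        measurableSet_Ioi
  · exact integrable_phi a hc
  · exact ((by fun_prop : Continuous fun t : ℝ => 2 * Real.sin (2*a*t) * Real.exp (-(c*t)))).aestronglyMeasurable
  · filter_upwards with t
    intro x _
    rw [Real.norm_eq_abs, abs_mul, abs_mul]
    rw [abs_exp, abs_two]
    calc 2 * |Real.sin (2*x*t)| * Real.exp (-(c*t)) ≤ 2 * 1 * Real.exp (-(c*t)) := by
          gcongr; exact Real.abs_sin_le_one _
      _ = 2 * Real.exp (-(c*t)) := by ring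
  · simpa [neg_mul] using (exp_neg_integrableOn_Ioi 0 hc).const_mul 2
  · filter_upwards [ae_restrict_mem measurableSet_Ioi] with t ht
    intro x _
    have ht0 : (0:ℝ) < t := ht
    have hs : HasDerivAt (fun x : ℝ => Real.sin (x*t)) (Real.cos (x*t) * t) x := by
      have := (Real.hasDerivAt_sin (x*t)).comp x ((hasDerivAt_id x).mul_const t)
      simpa [Function.comp_def] using this
    have H := (((hs.pow 2).const_mul 2).mul_const (Real.exp (-(c*t)))).div_const t
    refine H.congr_deriv ?_
    rw [show (2:ℝ)*x*t = 2*(x*t) by ring, Real.sin_two_mul]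
    field_simp
    ring

lemma phi_value (a : ℝ) {c : ℝ} (hc : 0 < c) :
    ∫ t in Set.Ioi (0:ℝ), 2 * Real.sin (a*t)^2 * Real.exp (-(c*t)) / t
      = (1/2) * Real.log ((c^2+4*a^2)/c^2) := by
  set ψ : ℝ → ℝ := fun a => ∫ t in Set.Ioi (0:ℝ), 2 * Real.sin (a*t)^2 * Real.exp (-(c*t)) / t with hψdef
  set g : ℝ → ℝ := fun a => (1/2) * Real.log ((c^2+4*a^2)/c^2) with hgdef
  have hpos : ∀ a : ℝ, (0:ℝ) < c^2+4*a^2 := fun a => by positivity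
  have hg : ∀ a : ℝ, HasDerivAt g (4*a/(c^2+4*a^2)) a := by
    intro a
    have h1 : HasDerivAt (fun a : ℝ => c^2 + 4*a^2) (8*a) a := by
      have := ((hasDerivAt_pow 2 a).const_mul 4).const_add (c^2)
      simpa using this.congr_deriv (by ring)
    have h2 := (h1.log (ne_of_gt (hpos a)))
    have h3 : HasDerivAt (fun a : ℝ => (1/2) * (Real.log (c^2+4*a^2) - Real.log (c^2)))
        ((1/2) * (8*a/(c^2+4*a^2))) a := ((h2.sub_const _).const_mul _)
    have heq : g = fun a : ℝ => (1/2) * (Real.log (c^2+4*a^2) - Real.log (c^2)) := by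
      funext b
      show (1/2) * Real.log ((c^2+4*b^2)/c^2) = _
      rw [Real.log_div (ne_of_gt (hpos b)) (by positivity)]
    rw [heq]
    exact h3.congr_deriv (by ring)
  have hconst : ∀ a : ℝ, ψ a - g a = ψ 0 - g 0 := by
    intro a
    refine is_const_of_deriv_eq_zero (f := fun a => ψ a - g a) ?_ ?_ a 0
    · exact fun b => ((phi_hasDeriv hc b).sub (hg b)).differentiableAt
    · intro b
      refine ((phi_hasDeriv hc b).sub (hg b)).deriv.trans ?_
      ring
  have hψ0 : ψ 0 = 0 := by
    rw [hψdef]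
    simp
  have hg0 : g 0 = 0 := by
    rw [hgdef]
    norm_num
  have h := hconst a
  rw [hψ0, hg0] at h
  have h2 : ψ a = g a := by linarith
  exact h2

lemma prod_range_two_mul (g : ℕ → ℂ) (n : ℕ) :
    ∏ j ∈ Finset.range (2*n), g j
      = (∏ k ∈ Finset.range n, g (2*k)) * ∏ k ∈ Finset.range n, g (2*k+1) := by
  induction n with
  | zero => simp
  | succ n ih =>
    rw [show 2*(n+1) = (2*n+1)+1 by ring, Finset.prod_range_succ, Finset.prod_range_succ,
      Finset.prod_range_succ, Finset.prod_range_succ, ih]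
    ring

lemma cosh_prod (a : ℝ) :
    Filter.Tendsto (fun n : ℕ => ∏ k ∈ Finset.range n, (1 + 4*a^2/(2*(k:ℝ)+1)^2)) atTop
      (𝓝 (Real.cosh (π*a))) := by
  rcases eq_or_ne a 0 with rfl | ha
  · simpa using (tendsto_const_nhds : Filter.Tendsto (fun _ : ℕ => (1:ℝ)) atTop (𝓝 1))
  set z : ℂ := (a:ℂ) * Complex.I with hz
  have hz2 : z^2 = -((a:ℂ)^2) := by
    rw [hz, mul_pow, Complex.I_sq]; ring
  have h2z2 : (2*z)^2 = -(4*(a:ℂ)^2) := by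
    rw [mul_pow, hz2]; ring
  have hπz : (π:ℂ) * z = ((π*a:ℝ):ℂ) * Complex.I := by
    rw [hz]; push_cast; ring
  have hsin : Complex.sin ((π:ℂ)*z) = ((Real.sinh (π*a) : ℝ):ℂ) * Complex.I := by
    rw [hπz, Complex.sin_mul_I, Complex.ofReal_sinh]
  have hsin_ne : Complex.sin ((π:ℂ)*z) ≠ 0 := by
    rw [hsin]
    refine mul_ne_zero (Complex.ofReal_ne_zero.mpr ?_) Complex.I_ne_zero
    exact Real.sinh_ne_zero.mpr (mul_ne_zero Real.pi_ne_zero ha)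
  have h1 := Complex.tendsto_euler_sin_prod z
  have htwo : Filter.Tendsto (fun n : ℕ => 2*n) atTop atTop :=
    (strictMono_nat_of_lt_succ (fun n => by omega)).tendsto_atTop
  have h2 := (Complex.tendsto_euler_sin_prod (2*z)).comp htwo
  -- the quotient of partial products
  have hkne : ∀ k : ℕ, ((k:ℂ)+1) ≠ 0 := fun k => Nat.cast_add_one_ne_zero k
  have step1 : ∀ n : ℕ, ∏ j ∈ Finset.range n, (1 - z^2/((j:ℂ)+1)^2)
      = ∏ k ∈ Finset.range n, (1 + (a:ℂ)^2/((k:ℂ)+1)^2) :=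
    fun n => Finset.prod_congr rfl fun k _ => by rw [hz2]; ring
  have step2 : ∀ n : ℕ, ∏ j ∈ Finset.range (2*n), (1 - (2*z)^2/((j:ℂ)+1)^2)
      = (∏ k ∈ Finset.range n, (1 + 4*(a:ℂ)^2/(2*(k:ℂ)+1)^2))
        * ∏ k ∈ Finset.range n, (1 + (a:ℂ)^2/((k:ℂ)+1)^2) := by
    intro n
    rw [prod_range_two_mul (fun j => 1 - (2*z)^2/((j:ℂ)+1)^2) n]
    congr 1
    · refine Finset.prod_congr rfl fun k _ => ?_
      rw [h2z2]; push_cast; ring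
    · refine Finset.prod_congr rfl fun k _ => ?_
      rw [h2z2]
      have hk : ((k:ℂ)+1) ≠ 0 := hkne k
      have hk2 : (2:ℂ)*(k:ℂ)+1+1 ≠ 0 := by
        rw [show (2:ℂ)*(k:ℂ)+1+1 = 2*((k:ℂ)+1) by ring]
        exact mul_ne_zero two_ne_zero hk
      push_cast
      field_simp
      ring
  have hP2ne : ∀ n : ℕ, (∏ k ∈ Finset.range n, (1 + (a:ℂ)^2/((k:ℂ)+1)^2)) ≠ 0 := by
    intro n
    refine Finset.prod_ne_zero_iff.mpr fun k _ => ?_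
    have : (1 + (a:ℂ)^2/((k:ℂ)+1)^2) = ((1 + a^2/((k:ℝ)+1)^2 : ℝ) : ℂ) := by push_cast; ring
    rw [this]
    exact Complex.ofReal_ne_zero.mpr (by positivity)
  have hA : ∀ n : ℕ, ((∏ k ∈ Finset.range n, (1 + 4*a^2/(2*(k:ℝ)+1)^2) : ℝ) : ℂ)
      = ∏ k ∈ Finset.range n, (1 + 4*(a:ℂ)^2/(2*(k:ℂ)+1)^2) := by
    intro n
    rw [Complex.ofReal_prod]
    exact Finset.prod_congr rfl fun k _ => by push_cast; ring
  have hzne : ((π:ℂ)) * z ≠ 0 := by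
    rw [hπz]
    exact mul_ne_zero (Complex.ofReal_ne_zero.mpr (mul_ne_zero Real.pi_ne_zero ha)) Complex.I_ne_zero
  have key : ∀ n : ℕ, ((∏ k ∈ Finset.range n, (1 + 4*a^2/(2*(k:ℝ)+1)^2) : ℝ) : ℂ)
      = ((π:ℂ)*(2*z) * ∏ j ∈ Finset.range (2*n), (1 - (2*z)^2/((j:ℂ)+1)^2))
        / (2 * ((π:ℂ)*z * ∏ j ∈ Finset.range n, (1 - z^2/((j:ℂ)+1)^2))) := by
    intro n
    rw [step2, step1, hA]
    rw [show (π:ℂ)*(2*z) * ((∏ k ∈ Finset.range n, (1 + 4*(a:ℂ)^2/(2*(k:ℂ)+1)^2))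
        * ∏ k ∈ Finset.range n, (1 + (a:ℂ)^2/((k:ℂ)+1)^2))
      = ((∏ k ∈ Finset.range n, (1 + 4*(a:ℂ)^2/(2*(k:ℂ)+1)^2)))
        * (2 * ((π:ℂ)*z * ∏ k ∈ Finset.range n, (1 + (a:ℂ)^2/((k:ℂ)+1)^2))) by ring]
    rw [mul_div_assoc]
    rw [div_self (mul_ne_zero two_ne_zero (mul_ne_zero hzne (hP2ne n))), mul_one]
  have hlim : Filter.Tendsto
      (fun n : ℕ => ((∏ k ∈ Finset.range n, (1 + 4*a^2/(2*(k:ℝ)+1)^2) : ℝ) : ℂ)) atTop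
      (𝓝 (Complex.sin ((π:ℂ)*(2*z)) / (2 * Complex.sin ((π:ℂ)*z)))) := by
    have hne2 : (2 : ℂ) * Complex.sin ((π:ℂ)*z) ≠ 0 := mul_ne_zero two_ne_zero hsin_ne
    have := h2.div (h1.const_mul 2) hne2
    exact this.congr fun n => (key n).symm
  have hval : Complex.sin ((π:ℂ)*(2*z)) / (2 * Complex.sin ((π:ℂ)*z))
      = ((Real.cosh (π*a) : ℝ) : ℂ) := by
    rw [show (π:ℂ)*(2*z) = 2*((π:ℂ)*z) by ring, Complex.sin_two_mul]
    rw [show (2:ℂ) * Complex.sin ((π:ℂ)*z) * Complex.cos ((π:ℂ)*z)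
        = Complex.cos ((π:ℂ)*z) * (2 * Complex.sin ((π:ℂ)*z)) by ring]
    rw [mul_div_assoc, div_self (mul_ne_zero two_ne_zero hsin_ne), mul_one]
    rw [hπz, Complex.cos_mul_I, Complex.ofReal_cosh]
  rw [hval] at hlim
  have hre := (Complex.continuous_re.tendsto _).comp hlim
  simpa only [Function.comp_def, Complex.ofReal_re] using hre

lemma summable_logs (a : ℝ) :
    Summable (fun n : ℕ => Real.log (1 + 4*a^2/(2*(n:ℝ)+1)^2)) := by
  have hb : Summable (fun n : ℕ => 4*a^2 * (1/((n:ℝ)+1)^2)) := by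
    have h0 : Summable (fun n : ℕ => 1/((n:ℝ)^2)) := by
      exact_mod_cast Real.summable_one_div_nat_pow.mpr (by norm_num)
    have h1 := (summable_nat_add_iff 1).mpr h0
    push_cast at h1
    exact h1.mul_left _
  refine Summable.of_nonneg_of_le (fun n => ?_) (fun n => ?_) hb
  · exact Real.log_nonneg (le_add_of_nonneg_right (by positivity))
  · have hpos : (0:ℝ) < 2*(n:ℝ)+1 := by positivity
    calc Real.log (1 + 4*a^2/(2*(n:ℝ)+1)^2)
        ≤ (1 + 4*a^2/(2*(n:ℝ)+1)^2) - 1 := Real.log_le_sub_one_of_pos (by positivity)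
      _ = 4*a^2/(2*(n:ℝ)+1)^2 := by ring
      _ ≤ 4*a^2 * (1/((n:ℝ)+1)^2) := by
          have hsq : ((n:ℝ)+1)^2 ≤ (2*(n:ℝ)+1)^2 := by nlinarith [(Nat.cast_nonneg n : (0:ℝ) ≤ (n:ℝ))]
          have h5 : 1/(2*(n:ℝ)+1)^2 ≤ 1/((n:ℝ)+1)^2 :=
            one_div_le_one_div_of_le (by positivity) hsq
          rw [div_eq_mul_one_div]
          exact mul_le_mul_of_nonneg_left h5 (by positivity)

lemma tsum_logs (a : ℝ) :
    ∑' n : ℕ, Real.log (1 + 4*a^2/(2*(n:ℝ)+1)^2) = Real.log (Real.cosh (π*a)) := by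
  have h1 := (summable_logs a).hasSum.tendsto_sum_nat
  have hfac : ∀ k : ℕ, (0:ℝ) < 1 + 4*a^2/(2*(k:ℝ)+1)^2 := fun k => by positivity
  have h2 : ∀ n : ℕ, ∑ k ∈ Finset.range n, Real.log (1 + 4*a^2/(2*(k:ℝ)+1)^2)
      = Real.log (∏ k ∈ Finset.range n, (1 + 4*a^2/(2*(k:ℝ)+1)^2)) :=
    fun n => (Real.log_prod fun k _ => (hfac k).ne').symm
  have h3 : Filter.Tendsto
      (fun n : ℕ => ∑ k ∈ Finset.range n, Real.log (1 + 4*a^2/(2*(k:ℝ)+1)^2)) atTop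
      (𝓝 (Real.log (Real.cosh (π*a)))) := by
    have hcont := (Real.continuousAt_log (Real.cosh_pos (x := π*a)).ne').tendsto
    have := hcont.comp (cosh_prod a)
    exact this.congr fun n => (h2 n).symm
  exact tendsto_nhds_unique h1 h3

lemma target_nonneg (a t : ℝ) (ht : 0 < t) : 0 ≤ Real.sin (a*t)^2/(t*Real.sinh t) := by
  have := Real.sinh_pos_iff.mpr ht
  positivity

lemma target_bound (a t : ℝ) (ht : 0 < t) :
    Real.sin (a*t)^2/(t*Real.sinh t) ≤ (a^2+4) * Real.exp 1 * Real.exp (-t) := by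
  have hsh : 0 < Real.sinh t := Real.sinh_pos_iff.mpr ht
  rcases le_or_gt t 1 with h1 | h1
  · have hb1 : Real.sin (a*t)^2/(t*Real.sinh t) ≤ a^2 := by
      rw [div_le_iff₀ (by positivity)]
      have hsin : Real.sin (a*t)^2 ≤ (a*t)^2 := Real.sin_sq_le_sq
      have hts : t ≤ Real.sinh t := Real.self_le_sinh_iff.mpr ht.le
      calc Real.sin (a*t)^2 ≤ (a*t)^2 := hsin
        _ = a^2 * (t*t) := by ring
        _ ≤ a^2 * (t*Real.sinh t) := by gcongr
    have he : (1:ℝ) ≤ Real.exp 1 * Real.exp (-t) := by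
      rw [← Real.exp_add]
      have : (0:ℝ) ≤ 1 + -t := by linarith
      calc (1:ℝ) = Real.exp 0 := (Real.exp_zero).symm
        _ ≤ Real.exp (1 + -t) := Real.exp_le_exp.mpr this
    calc Real.sin (a*t)^2/(t*Real.sinh t) ≤ a^2 := hb1
      _ = a^2 * 1 := (mul_one _).symm
      _ ≤ (a^2+4) * (Real.exp 1 * Real.exp (-t)) := by
          apply mul_le_mul (by linarith) he one_pos.le (by positivity)
      _ = (a^2+4) * Real.exp 1 * Real.exp (-t) := by ring
  · have hexpneg : Real.exp (-t) * Real.exp t = 1 := by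
      rw [← Real.exp_add]; simp
    have hsh4 : Real.exp t / 4 ≤ Real.sinh t := by
      rw [Real.sinh_eq]
      have hneg : Real.exp (-t) ≤ 1/2 := by
        have h2 : (2:ℝ) < Real.exp t := by
          have := Real.add_one_le_exp t; linarith
        nlinarith [Real.exp_pos (-t)]
      nlinarith [Real.exp_pos t]
    have hb2 : Real.sin (a*t)^2/(t*Real.sinh t) ≤ 4 * Real.exp (-t) := by
      have h4 : (0:ℝ) < t * Real.sinh t := by positivity
      rw [div_le_iff₀ h4]
      have hs1 : Real.sin (a*t)^2 ≤ 1 := Real.sin_sq_le_one _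
      have key : (1:ℝ) ≤ 4 * Real.exp (-t) * (t * Real.sinh t) := by
        nlinarith [mul_le_mul_of_nonneg_left hsh4
            (by positivity : (0:ℝ) ≤ 4 * Real.exp (-t) * t), hexpneg, ht,
          Real.exp_pos (-t), Real.exp_pos t]
      linarith
    have he1 : (1:ℝ) ≤ Real.exp 1 := by
      have := Real.add_one_le_exp 1; linarith
    calc Real.sin (a*t)^2/(t*Real.sinh t) ≤ 4 * Real.exp (-t) := hb2
      _ ≤ (a^2+4) * Real.exp 1 * Real.exp (-t) := by
          have h6 : (4:ℝ) ≤ (a^2+4) * Real.exp 1 := by nlinarith [sq_nonneg a]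
          exact mul_le_mul_of_nonneg_right h6 (Real.exp_pos (-t)).le

lemma hasSum_sinh (a t : ℝ) (ht : 0 < t) :
    HasSum (fun n : ℕ => 2 * Real.sin (a*t)^2 * Real.exp (-((2*(n:ℝ)+1)*t)) / t)
      (Real.sin (a*t)^2/(t*Real.sinh t)) := by
  have hr0 : (0:ℝ) ≤ Real.exp (-(2*t)) := (Real.exp_pos _).le
  have hr1 : Real.exp (-(2*t)) < 1 := by
    rw [Real.exp_lt_one_iff]; linarith
  have hgeo := hasSum_geometric_of_lt_one hr0 hr1
  have hmul := hgeo.mul_left (2 * Real.sin (a*t)^2 * Real.exp (-t) / t)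
  have hsh : 0 < Real.sinh t := Real.sinh_pos_iff.mpr ht
  have hfun : ∀ n : ℕ, 2 * Real.sin (a*t)^2 * Real.exp (-t) / t * Real.exp (-(2*t))^n
      = 2 * Real.sin (a*t)^2 * Real.exp (-((2*(n:ℝ)+1)*t)) / t := by
    intro n
    rw [← Real.exp_nat_mul, ← mul_div_right_comm, mul_assoc _ (Real.exp (-t)), ← Real.exp_add]
    ring_nf
  have hval : 2 * Real.sin (a*t)^2 * Real.exp (-t) / t * (1 - Real.exp (-(2*t)))⁻¹
      = Real.sin (a*t)^2/(t*Real.sinh t) := by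
    have h1 : 1 - Real.exp (-(2*t)) = Real.exp (-t) * (2 * Real.sinh t) := by
      rw [Real.sinh_eq]
      rw [show Real.exp (-t) * (2 * ((Real.exp t - Real.exp (-t))/2))
          = Real.exp (-t) * Real.exp t - Real.exp (-t) * Real.exp (-t) by ring]
      rw [← Real.exp_add, ← Real.exp_add]
      norm_num
      ring
    rw [h1]
    have he : Real.exp (-t) ≠ 0 := (Real.exp_pos _).ne'
    field_simp
  rw [← hval]
  exact hmul.congr_fun fun n => (hfun n).symm

lemma phi_value' (a : ℝ) {c : ℝ} (hc : 0 < c) :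
    ∫ t in Set.Ioi (0:ℝ), 2 * Real.sin (a*t)^2 * Real.exp (-(c*t)) / t
      = (1/2) * Real.log (1 + 4*a^2/c^2) := by
  rw [phi_value a hc]
  congr 1
  rw [show (c^2+4*a^2)/c^2 = 1 + 4*a^2/c^2 by field_simp]

theorem g0_integral_identity_aux (x : ℝ) :
    IntegrableOn
      (fun t : ℝ => Real.sin (x * t / (2 * Real.pi)) ^ 2 / (t * Real.sinh t))
      (Set.Ioi 0) ∧
    2 * ∫ t in Set.Ioi (0 : ℝ),
        Real.sin (x * t / (2 * Real.pi)) ^ 2 / (t * Real.sinh t)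
      = Real.log (Real.cosh (x / 2)) := by
  set a : ℝ := x / (2 * Real.pi) with ha_def
  have harg : ∀ t : ℝ, x * t / (2 * Real.pi) = a * t := fun t => by rw [ha_def]; ring
  simp only [harg]
  have hc : ∀ n : ℕ, (0:ℝ) < 2*(n:ℝ)+1 := fun n => by positivity
  -- integrability
  have hint : IntegrableOn (fun t : ℝ => Real.sin (a*t)^2/(t*Real.sinh t)) (Set.Ioi 0) := by
    have hi : IntegrableOn (fun t : ℝ => (a^2+4) * Real.exp 1 * Real.exp (-t)) (Set.Ioi 0) := by
      simpa [neg_mul, one_mul, IntegrableOn] using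
        (exp_neg_integrableOn_Ioi 0 one_pos).const_mul ((a^2+4) * Real.exp 1)
    refine Integrable.mono' hi ?_ ?_
    · refine ContinuousOn.aestronglyMeasurable ?_ measurableSet_Ioi
      refine ContinuousOn.div (by fun_prop) (by fun_prop) fun t ht => ?_
      have ht0 : (0:ℝ) < t := ht
      have := Real.sinh_pos_iff.mpr ht0
      positivity
    · filter_upwards [ae_restrict_mem measurableSet_Ioi] with t ht
      rw [Real.norm_eq_abs, abs_of_nonneg (target_nonneg a t ht)]
      exact target_bound a t ht
  refine ⟨hint, ?_⟩
  -- rewrite integrand as a tsum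
  have heq : ∫ t in Set.Ioi (0:ℝ), Real.sin (a*t)^2/(t*Real.sinh t)
      = ∫ t in Set.Ioi (0:ℝ), ∑' n : ℕ, 2 * Real.sin (a*t)^2 * Real.exp (-((2*(n:ℝ)+1)*t)) / t := by
    refine setIntegral_congr_fun measurableSet_Ioi fun t ht => ?_
    exact ((hasSum_sinh a t ht).tsum_eq).symm
  have hmeas : ∀ n : ℕ, AEStronglyMeasurable
      (fun t : ℝ => 2 * Real.sin (a*t)^2 * Real.exp (-((2*(n:ℝ)+1)*t)) / t)
      (volume.restrict (Set.Ioi 0)) := fun n =>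
    (ContinuousOn.div (by fun_prop) continuousOn_id fun t ht => ne_of_gt ht).aestronglyMeasurable
      measurableSet_Ioi
  have hnn : ∀ n : ℕ, (0:ℝ) ≤ (1/2) * Real.log (1 + 4*a^2/(2*(n:ℝ)+1)^2) := fun n => by
    have := Real.log_nonneg (le_add_of_nonneg_right
      (by positivity : (0:ℝ) ≤ 4*a^2/(2*(n:ℝ)+1)^2))
    linarith
  have hsummable : Summable (fun n : ℕ => (1/2) * Real.log (1 + 4*a^2/(2*(n:ℝ)+1)^2)) :=
    (summable_logs a).mul_left _
  have hlint : ∀ n : ℕ, ∫⁻ t in Set.Ioi (0:ℝ), ‖2 * Real.sin (a*t)^2 * Real.exp (-((2*(n:ℝ)+1)*t)) / t‖ₑ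
      = ENNReal.ofReal ((1/2) * Real.log (1 + 4*a^2/(2*(n:ℝ)+1)^2)) := by
    intro n
    have hposae : 0 ≤ᵐ[volume.restrict (Set.Ioi (0:ℝ))]
        fun t : ℝ => 2 * Real.sin (a*t)^2 * Real.exp (-((2*(n:ℝ)+1)*t)) / t := by
      filter_upwards [ae_restrict_mem measurableSet_Ioi] with t ht
      have ht0 : (0:ℝ) < t := ht
      positivity
    rw [← phi_value' a (hc n)]
    rw [MeasureTheory.ofReal_integral_eq_lintegral_ofReal (integrable_phi a (hc n)) hposae]
    refine lintegral_congr_ae ?_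
    filter_upwards [hposae] with t ht0
    rw [← Real.enorm_eq_ofReal ht0]
  have hexch := MeasureTheory.integral_tsum hmeas ?_
  · rw [heq, hexch]
    have hvals : ∀ n : ℕ, ∫ t in Set.Ioi (0:ℝ),
        2 * Real.sin (a*t)^2 * Real.exp (-((2*(n:ℝ)+1)*t)) / t
        = (1/2) * Real.log (1 + 4*a^2/(2*(n:ℝ)+1)^2) := fun n => phi_value' a (hc n)
    rw [tsum_congr hvals]
    have h2 : (2:ℝ) * ∑' n : ℕ, (1/2) * Real.log (1 + 4*a^2/(2*(n:ℝ)+1)^2)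
        = ∑' n : ℕ, Real.log (1 + 4*a^2/(2*(n:ℝ)+1)^2) := by
      rw [← tsum_mul_left]
      exact tsum_congr fun n => by ring
    rw [h2, tsum_logs a]
    have hpa : Real.pi * a = x / 2 := by
      rw [ha_def]
      rw [mul_div_assoc']
      rw [div_eq_div_iff (by positivity) (by norm_num : (2:ℝ) ≠ 0)]
      ring
    rw [hpa]
  · rw [funext hlint]  -- ∑' n, ofReal (...) ≠ ⊤
    rw [← ENNReal.ofReal_tsum_of_nonneg hnn hsummable]
    exact ENNReal.ofReal_ne_top

end g0_aux

/-- the building-block identity `g₀` on the line `θ = x + iπ`: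
`2∫₀^∞ sin²(xt/2π)/(t·sinh t) dt = log cosh(x/2)`, the integral being absolutely
convergent. -/
theorem g0_integral_identity (x : ℝ) :
    IntegrableOn
      (fun t : ℝ => Real.sin (x * t / (2 * Real.pi)) ^ 2 / (t * Real.sinh t))
      (Set.Ioi 0) ∧
    2 * ∫ t in Set.Ioi (0 : ℝ),
        Real.sin (x * t / (2 * Real.pi)) ^ 2 / (t * Real.sinh t)
      = Real.log (Real.cosh (x / 2)) := by
  exact g0_integral_identity_aux x
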